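/- Let X = X₁ × ⋯ × X_n with |X_i| ≥ 2, let 1 ≤ k ≤ n, let A ∈ ℝ^{a×X} be a matrix whose rows span V_k(X), and let Y be a finite nonempty set. If X can be covered by |Y| radius-k Hamming balls, then there exists a family of vectors (v_y)_{y∈Y} in ℝ^a whose induced slicing (C_y)_{y∈Y} partitions X and for which the columns of A_{C_y} are linearly independent for every y ∈ Y; consequently, the maximum over all families (v_y)_{y∈Y} of ∑_{y∈Y} rank(A_{C_y}) equals |X|. -/

import Mathlib

open scoped Classical BigOperators

/-- `V_k(X)`: the span of all functions on `X = ∏ i, X_i` depending on at most `k`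
coordinates. -/
noncomputable def Vk (n : ℕ) (q : Fin n → ℕ) (k : ℕ) :
    Submodule ℝ ((∀ i, Fin (q i)) → ℝ) :=
  Submodule.span ℝ
    {f : (∀ i, Fin (q i)) → ℝ | ∃ s : Finset (Fin n), s.card ≤ k ∧
      ∀ x x' : ∀ i, Fin (q i), (∀ i ∈ s, x i = x' i) → f x = f x'}

/-- The rank of the submatrix `A_C` of columns of `A` indexed by `C`. -/
noncomputable def colRank {m X : Type*} [Fintype m] (A : Matrix m X ℝ) (C : Set X) : ℕ :=
  Module.finrank ℝ (Submodule.span ℝ ((fun x => fun i => A i x) '' C))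

/-- The slicing induced by a family of vectors `(v_y)`. -/
def sliceSet {a : ℕ} {X Y : Type*} (A : Matrix (Fin a) X ℝ)
    (v : Y → Fin a → ℝ) (y : Y) : Set X :=
  {x | ∀ y', y' ≠ y → ∑ i, A i x * v y' i < ∑ i, A i x * v y i}

lemma aux_ind_mem (n : ℕ) (q : Fin n → ℕ) (k : ℕ) (x₀ cc : ∀ i, Fin (q i))
    (h : hammingDist x₀ cc ≤ k) :
    (fun z : ∀ i, Fin (q i) =>
      ∏ i ∈ Finset.univ.filter (fun i => x₀ i ≠ cc i), (if z i = x₀ i then (1:ℝ) else 0))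
      ∈ Vk n q k := by
  apply Submodule.subset_span
  refine ⟨Finset.univ.filter (fun i => x₀ i ≠ cc i), h, ?_⟩
  intro x x' hxx'
  exact Finset.prod_congr rfl fun i hi => by rw [hxx' i hi]

lemma aux_dist_mem (n : ℕ) (q : Fin n → ℕ) (k : ℕ) (hk1 : 1 ≤ k)
    (cc : ∀ i, Fin (q i)) (ε : ℝ) :
    (fun x : ∀ i, Fin (q i) => ε - (hammingDist x cc : ℝ)) ∈ Vk n q k := by
  have hrw : (fun x : ∀ i, Fin (q i) => ε - (hammingDist x cc : ℝ)) =
      (fun _ => ε) - ∑ i : Fin n, (fun x : ∀ i, Fin (q i) => if x i = cc i then (0:ℝ) else 1) := by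
    funext x
    have : (hammingDist x cc : ℝ) = ∑ i : Fin n, (if x i = cc i then (0:ℝ) else 1) := by
      rw [hammingDist, Finset.card_filter]
      push_cast
      refine Finset.sum_congr rfl fun i _ => ?_
      by_cases h : x i = cc i <;> simp [h]
    simp [this, Finset.sum_apply]
  rw [hrw]
  refine Submodule.sub_mem _ ?_ (Submodule.sum_mem _ fun i _ => ?_)
  · exact Submodule.subset_span ⟨∅, by simp, fun x x' _ => rfl⟩
  · exact Submodule.subset_span ⟨{i}, by simpa using hk1,
      fun x x' hxx' => by simp only []; rw [hxx' i (Finset.mem_singleton_self i)]⟩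

lemma aux_ball_li (n : ℕ) (q : Fin n → ℕ) (k : ℕ)
    (a : ℕ) (A : Matrix (Fin a) (∀ i, Fin (q i)) ℝ)
    (hA : Submodule.span ℝ (Set.range A) = Vk n q k)
    (cc : ∀ i, Fin (q i)) (S : Set (∀ i, Fin (q i)))
    (hS : ∀ x ∈ S, hammingDist x cc ≤ k) :
    LinearIndependent ℝ (fun x : S => fun i => A i (x : ∀ i, Fin (q i))) := by
  rw [Fintype.linearIndependent_iff]
  intro g hsum
  by_contra hg
  push_neg at hg
  obtain ⟨z, hz⟩ := hg
  -- the evaluation functional vanishes on the span of the rows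
  have hev : ∀ f ∈ Vk n q k, ∑ x : S, g x * f (x : ∀ i, Fin (q i)) = 0 := by
    rw [← hA]
    intro f hf
    induction hf using Submodule.span_induction with
    | mem f hf =>
        obtain ⟨i, rfl⟩ := hf
        have := congrFun hsum i
        simpa [Finset.sum_apply, smul_eq_mul] using this
    | zero => simp
    | add f₁ f₂ _ _ h1 h2 => simp [mul_add, Finset.sum_add_distrib, h1, h2]
    | smul r f _ h =>
        simp only [Pi.smul_apply, smul_eq_mul]
        rw [show (∑ x : S, g x * (r * f (x : ∀ i, Fin (q i)))) =
          r * ∑ x : S, g x * f (x : ∀ i, Fin (q i)) by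
            rw [Finset.mul_sum]; exact Finset.sum_congr rfl fun x _ => by ring, h]
        simp
  -- pick a support element of maximal distance
  set T : Finset S := Finset.univ.filter (fun x => g x ≠ 0) with hT
  have hTne : T.Nonempty := ⟨z, by simp [hT, hz]⟩
  obtain ⟨x₀, hx₀T, hx₀max⟩ := T.exists_max_image
    (fun x => hammingDist (x : ∀ i, Fin (q i)) cc) hTne
  have hgx₀ : g x₀ ≠ 0 := by simpa [hT] using hx₀T
  set D₀ : Finset (Fin n) := Finset.univ.filter (fun i => (x₀ : ∀ i, Fin (q i)) i ≠ cc i) with hD₀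
  set f : (∀ i, Fin (q i)) → ℝ :=
    fun z => ∏ i ∈ D₀, (if z i = (x₀ : ∀ i, Fin (q i)) i then (1:ℝ) else 0) with hf
  have hfmem : f ∈ Vk n q k :=
    aux_ind_mem n q k (x₀ : ∀ i, Fin (q i)) cc (hS _ x₀.2)
  have key : ∑ x : S, g x * f (x : ∀ i, Fin (q i)) = g x₀ := by
    rw [Finset.sum_eq_single x₀]
    · have : f (x₀ : ∀ i, Fin (q i)) = 1 := Finset.prod_eq_one fun i _ => by simp
      rw [this, mul_one]
    · intro x _ hxne
      by_cases hgx : g x = 0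
      · rw [hgx, zero_mul]
      · -- show f x = 0
        have hxT : x ∈ T := by simp [hT, hgx]
        by_contra hne
        have hfx : f (x : ∀ i, Fin (q i)) ≠ 0 := fun h => hne (by rw [h, mul_zero])
        have hagree : ∀ i ∈ D₀, (x : ∀ i, Fin (q i)) i = (x₀ : ∀ i, Fin (q i)) i := by
          intro i hi
          have := Finset.prod_ne_zero_iff.mp hfx i hi
          by_contra hcon
          simp [hcon] at this
        -- D₀ ⊆ Dx and card Dx ≤ card D₀
        set Dx : Finset (Fin n) :=
          Finset.univ.filter (fun i => (x : ∀ i, Fin (q i)) i ≠ cc i) with hDx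
        have hsub : D₀ ⊆ Dx := by
          intro i hi
          have hi' : (x₀ : ∀ i, Fin (q i)) i ≠ cc i := by simpa [hD₀] using hi
          simp only [hDx, Finset.mem_filter, Finset.mem_univ, true_and]
          rw [hagree i hi]; exact hi'
        have hcard : Dx.card ≤ D₀.card := by
          have h1 : Dx.card = hammingDist (x : ∀ i, Fin (q i)) cc := rfl
          have h2 : D₀.card = hammingDist (x₀ : ∀ i, Fin (q i)) cc := rfl
          rw [h1, h2]
          exact hx₀max x hxT
        have hDeq : D₀ = Dx := Finset.eq_of_subset_of_card_le hsub hcard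
        have hxeq : x = x₀ := by
          apply Subtype.ext
          funext i
          by_cases hi : i ∈ D₀
          · exact hagree i hi
          · have hix : i ∉ Dx := hDeq ▸ hi
            have h1 : (x : ∀ i, Fin (q i)) i = cc i := by
              by_contra hcon
              exact hix (by simp [hDx, hcon])
            have h2 : (x₀ : ∀ i, Fin (q i)) i = cc i := by
              by_contra hcon
              exact hi (by simp [hD₀, hcon])
            rw [h1, h2]
        exact hxne hxeq
    · intro h
      exact absurd (Finset.mem_univ x₀) h
  rw [hev f hfmem] at key
  exact hgx₀ key.symm

set_option maxHeartbeats 1000000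

/-- If the rows of `A` span `V_k(X)` and `X` can be covered by `|Y|`
radius-`k` Hamming balls, then there is a family `(v_y)` whose induced slicing partitions
`X` with the columns of each block `A_{C_y}` linearly independent; consequently the
maximum over all families of `∑_y rank(A_{C_y})` equals `|X|`. -/
theorem tropical_mixture_k_interaction_covering_balls
    (n : ℕ) (q : Fin n → ℕ) (hq : ∀ i, 2 ≤ q i)
    (k : ℕ) (hk1 : 1 ≤ k) (hkn : k ≤ n)
    (a : ℕ) (A : Matrix (Fin a) (∀ i, Fin (q i)) ℝ)
    (hA : Submodule.span ℝ (Set.range A) = Vk n q k)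
    {Y : Type*} [Fintype Y] [Nonempty Y]
    (c : Y → ∀ i, Fin (q i))
    (hcov : ∀ x : ∀ i, Fin (q i), ∃ y : Y, hammingDist x (c y) ≤ k) :
    (∃ v : Y → Fin a → ℝ,
      (∀ x, ∃ y, x ∈ sliceSet A v y) ∧
      (∀ y y', y ≠ y' → Disjoint (sliceSet A v y) (sliceSet A v y')) ∧
      (∀ y : Y, LinearIndependent ℝ
        (fun x : sliceSet A v y => fun i => A i (x : ∀ i, Fin (q i))))) ∧
    IsGreatest {s : ℕ | ∃ v : Y → Fin a → ℝ, s = ∑ y : Y, colRank A (sliceSet A v y)}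
      (Fintype.card (∀ i, Fin (q i))) := by
  classical
  have hYpos : 0 < (Fintype.card Y : ℝ) := by
    exact_mod_cast Fintype.card_pos
  set e := Fintype.equivFin Y with he
  set ε : Y → ℝ := fun y => (e y : ℝ) / (Fintype.card Y) with hε
  have hεinj : Function.Injective ε := by
    intro y y' h
    have : ((e y : ℕ) : ℝ) = ((e y' : ℕ) : ℝ) := by
      rw [hε] at h; simp only at h; exact (div_left_inj' hYpos.ne').mp h
    exact e.injective (Fin.ext (by exact_mod_cast this))
  have hεnn : ∀ y, 0 ≤ ε y := fun y => by positivity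
  have hεlt1 : ∀ y, ε y < 1 := by
    intro y
    rw [hε]
    rw [div_lt_one hYpos]
    exact_mod_cast (e y).2
  have hεdiff : ∀ y y', ε y - ε y' < 1 := fun y y' => by
    have := hεlt1 y; have := hεnn y'; linarith
  set F : Y → (∀ i, Fin (q i)) → ℝ :=
    fun y x => ε y - (hammingDist x (c y) : ℝ) with hF
  have hFmem : ∀ y, F y ∈ Submodule.span ℝ (Set.range A) := by
    intro y; rw [hA]; exact aux_dist_mem n q k hk1 (c y) (ε y)
  have hv0 : ∀ y, ∃ v : Fin a → ℝ, ∀ x, ∑ i, A i x * v i = F y x := by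
    intro y
    obtain ⟨v, hv⟩ := (Submodule.mem_span_range_iff_exists_fun ℝ).mp (hFmem y)
    refine ⟨v, fun x => ?_⟩
    have := congrFun hv x
    simpa [Finset.sum_apply, smul_eq_mul, mul_comm] using this
  choose v hv using hv0
  have hslice : ∀ y x, x ∈ sliceSet A v y ↔ ∀ y', y' ≠ y → F y' x < F y x := by
    intro y x
    simp only [sliceSet, Set.mem_setOf_eq, hv]
  -- uniqueness of maximizer
  have huniq : ∀ (x : ∀ i, Fin (q i)) (y y' : Y), F y x = F y' x → y = y' := by
    intro x y y' h
    have hd : (hammingDist x (c y) : ℝ) - (hammingDist x (c y') : ℝ) = ε y - ε y' := by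
      simp only [hF] at h; linarith
    have h1 : (hammingDist x (c y) : ℝ) < (hammingDist x (c y') : ℝ) + 1 := by
      have := hεdiff y y'; linarith
    have h2 : (hammingDist x (c y') : ℝ) < (hammingDist x (c y) : ℝ) + 1 := by
      have := hεdiff y' y; linarith
    have hdd : hammingDist x (c y) = hammingDist x (c y') := by
      have l1 : hammingDist x (c y) < hammingDist x (c y') + 1 := by exact_mod_cast h1
      have l2 : hammingDist x (c y') < hammingDist x (c y) + 1 := by exact_mod_cast h2
      omega
    apply hεinj
    rw [hdd] at hd
    linarith
  have hcover : ∀ x, ∃ y, x ∈ sliceSet A v y := by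
    intro x
    obtain ⟨y, -, hmax⟩ := Finset.univ.exists_max_image (fun y => F y x) Finset.univ_nonempty
    refine ⟨y, (hslice y x).2 fun y' hy' => ?_⟩
    rcases lt_or_eq_of_le (hmax y' (Finset.mem_univ y')) with h | h
    · exact h
    · exact absurd (huniq x y' y h) hy'
  have hball : ∀ y x, x ∈ sliceSet A v y → hammingDist x (c y) ≤ k := by
    intro y x hx
    obtain ⟨y₀, hy₀⟩ := hcov x
    by_cases h : y₀ = y
    · exact h ▸ hy₀
    · have hlt := (hslice y x).1 hx y₀ h
      have hd : (hammingDist x (c y) : ℝ) < (hammingDist x (c y₀) : ℝ) + 1 := by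
        simp only [hF] at hlt
        have := hεdiff y y₀; linarith
      have : hammingDist x (c y) < hammingDist x (c y₀) + 1 := by exact_mod_cast hd
      omega
  have hdisj : ∀ (w : Y → Fin a → ℝ) (y y' : Y), y ≠ y' →
      Disjoint (sliceSet A w y) (sliceSet A w y') := by
    intro w y y' hne
    rw [Set.disjoint_left]
    intro x hx hx'
    exact lt_asymm (hx y' (Ne.symm hne)) (hx' y hne)
  have hli : ∀ y : Y, LinearIndependent ℝ
      (fun x : sliceSet A v y => fun i => A i (x : ∀ i, Fin (q i))) :=
    fun y => aux_ball_li n q k a A hA (c y) _ (hball y)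
  refine ⟨⟨v, hcover, hdisj v, hli⟩, ?_, ?_⟩
  · -- membership : the max is attained by v
    refine ⟨v, ?_⟩
    -- σ assigns each x its slice
    have hσ0 : ∀ x, ∃ y, x ∈ sliceSet A v y := hcover
    choose σ hσ using hσ0
    have hσeq : ∀ x y, x ∈ sliceSet A v y → σ x = y := by
      intro x y hx
      by_contra hne
      exact Set.disjoint_left.mp (hdisj v _ _ hne) (hσ x) hx
    have hfin : ∀ y, (sliceSet A v y).toFinset = Finset.univ.filter (fun x => σ x = y) := by
      intro y
      ext x
      simp only [Set.mem_toFinset, Finset.mem_filter, Finset.mem_univ, true_and]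
      exact ⟨hσeq x y, fun h => h ▸ hσ x⟩
    have hcardsum : ∑ y : Y, (sliceSet A v y).toFinset.card
        = Fintype.card (∀ i, Fin (q i)) := by
      rw [← Finset.card_univ]
      rw [Finset.card_eq_sum_card_fiberwise (f := σ) (t := Finset.univ)
        (fun x _ => Finset.mem_univ (σ x))]
      exact Finset.sum_congr rfl fun y _ => by rw [hfin y]
    have hrank : ∀ y, colRank A (sliceSet A v y) = (sliceSet A v y).toFinset.card := by
      intro y
      have him := LinearIndepOn.id_image (s := sliceSet A v y) (v := fun x => fun i => A i x) (hli y)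
      have hinj : Set.InjOn (fun x => fun i => A i x) (sliceSet A v y) := by
        rw [Set.injOn_iff_injective]
        exact (hli y).injective
      rw [colRank, finrank_span_set_eq_card him, Set.toFinset_image,
        Finset.card_image_of_injOn (by simpa using hinj)]
    rw [Finset.sum_congr rfl fun y _ => hrank y, hcardsum]
  · -- upper bound
    rintro s ⟨w, rfl⟩
    have h1 : ∀ y, colRank A (sliceSet A w y) ≤ (sliceSet A w y).toFinset.card := by
      intro y
      calc colRank A (sliceSet A w y)
          ≤ (((fun x => fun i => A i x) '' sliceSet A w y).toFinset).card :=
            finrank_span_le_card _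
        _ ≤ (sliceSet A w y).toFinset.card := by
            rw [Set.toFinset_image]; exact Finset.card_image_le
    calc ∑ y : Y, colRank A (sliceSet A w y)
        ≤ ∑ y : Y, (sliceSet A w y).toFinset.card :=
          Finset.sum_le_sum fun y _ => h1 y
      _ = (Finset.univ.biUnion fun y => (sliceSet A w y).toFinset).card := by
          rw [Finset.card_biUnion]
          intro y _ y' _ hne
          rw [Function.onFun, Set.disjoint_toFinset]
          exact hdisj w y y' hne
      _ ≤ Fintype.card (∀ i, Fin (q i)) := Finset.card_le_univ _
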